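/- Let g be a finite-dimensional complex semisimple Lie algebra, p = l ⊕ u a parabolic subalgebra, C a weight l-module with support a single coset of h_s^*, and P = Ind_p(C) the associated almost-simple quotient of the parabolic induction. If v is a non-zero weight vector of P, then (U(u)·v) ∩ (1 ⊗ C) ≠ 0. -/

import Mathlib

/-- A Borel subalgebra: a maximal solvable Lie subalgebra. -/
def IsBorel (g : Type*) [LieRing g] [LieAlgebra ℂ g] (b : LieSubalgebra ℂ g) : Prop :=
  LieAlgebra.IsSolvable ↥b ∧
    ∀ b' : LieSubalgebra ℂ g, LieAlgebra.IsSolvable ↥b' → b ≤ b' → b' = b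

/-- A parabolic subalgebra `p = l ⊕ u` of `g` together with a Levi decomposition: the Levi
factor `l`, the nilradical `u` and the opposite nilradical `u⁻`, satisfying
`g = u⁻ ⊕ l ⊕ u`, `[l,u] ⊆ u`, `[l,u⁻] ⊆ u⁻`, `u, u⁻` nilpotent, and `p = l ⊔ u` contains a
Borel subalgebra. -/
structure ParabolicDecomp (g : Type*) [LieRing g] [LieAlgebra ℂ g] where
  l : LieSubalgebra ℂ g
  u : LieSubalgebra ℂ g
  uminus : LieSubalgebra ℂ g
  lu : ∀ x ∈ l, ∀ y ∈ u, ⁅x, y⁆ ∈ u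
  lum : ∀ x ∈ l, ∀ y ∈ uminus, ⁅x, y⁆ ∈ uminus
  u_nilpotent : LieRing.IsNilpotent ↥u
  um_nilpotent : LieRing.IsNilpotent ↥uminus
  sup_top : l.toSubmodule ⊔ u.toSubmodule ⊔ uminus.toSubmodule = ⊤
  disj_lu : Disjoint l.toSubmodule u.toSubmodule
  disj_lum : Disjoint (l.toSubmodule ⊔ u.toSubmodule) uminus.toSubmodule
  parabolic : ∃ b : LieSubalgebra ℂ g, IsBorel g b ∧ b ≤ l ⊔ u

/-- The subspace `M^u` of vectors of a `g`-module `M` annihilated by the nilradical `u`. -/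
def uInvariants {g : Type*} [LieRing g] [LieAlgebra ℂ g] (D : ParabolicDecomp g)
    (M : Type*) [AddCommGroup M] [Module ℂ M] [LieRingModule g M] [LieModule ℂ g M] :
    Submodule ℂ M where
  carrier := {v : M | ∀ x ∈ D.u, ⁅x, v⁆ = 0}
  add_mem' := by
    intro a b ha hb x hx
    rw [lie_add, ha x hx, hb x hx, add_zero]
  zero_mem' := by
    intro x hx
    simp
  smul_mem' := by
    intro c a ha x hx
    rw [lie_smul, ha x hx, smul_zero]

/-- The almost-simple quotient `Ind_p(N)` of the parabolic induction
`U(g) ⊗_{U(p)} N` of an `l`-module `N` (with `u` acting by zero), encoded by its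
characteristic properties: it contains a canonical copy `j : N ↪ M` of `N`, killed by `u`
and `l`-equivariant, which generates `M`; every non-zero `g`-submodule of `M` meets `j(N)`
non-trivially (almost-simplicity); and, by Poincaré–Birkhoff–Witt, `M = j(N) ⊕ u⁻·M`. -/
structure AlmostSimpleInduction {g : Type*} [LieRing g] [LieAlgebra ℂ g]
    (D : ParabolicDecomp g)
    (N : Type*) [AddCommGroup N] [Module ℂ N] [LieRingModule D.l N] [LieModule ℂ D.l N]
    (M : Type*) [AddCommGroup M] [Module ℂ M] [LieRingModule g M] [LieModule ℂ g M] where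
  j : N →ₗ[ℂ] M
  inj : Function.Injective j
  equivariant : ∀ (x : D.l) (n : N), j ⁅x, n⁆ = ⁅(x : g), j n⁆
  u_annihilates : ∀ x ∈ D.u, ∀ n : N, ⁅x, j n⁆ = 0
  generates : LieSubmodule.lieSpan ℂ g (Set.range j) = ⊤
  almost_simple : ∀ Q : LieSubmodule ℂ g M, Q ≠ ⊥ → ∃ n : N, j n ≠ 0 ∧ j n ∈ Q
  pbw_compl : IsCompl (LinearMap.range j)
    (Submodule.span ℂ {m : M | ∃ x ∈ D.uminus, ∃ w : M, m = ⁅x, w⁆})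

/-- The `μ`-weight space of a `g`-module with respect to the Cartan subalgebra `h`. -/
def gWeightSpace {g : Type*} [LieRing g] [LieAlgebra ℂ g] (h : LieSubalgebra ℂ g)
    (M : Type*) [AddCommGroup M] [Module ℂ M] [LieRingModule g M] [LieModule ℂ g M]
    (μ : g → ℂ) : Submodule ℂ M where
  carrier := {v : M | ∀ x ∈ h, ⁅x, v⁆ = μ x • v}
  add_mem' := by
    intro a b ha hb x hx
    rw [lie_add, ha x hx, hb x hx, smul_add]
  zero_mem' := by
    intro x hx
    simp
  smul_mem' := by
    intro c a ha x hx
    rw [lie_smul, ha x hx, smul_comm]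

/-- The `μ`-weight space of an `l`-module with respect to the Cartan subalgebra `h ≤ l`. -/
def lWeightSpace {g : Type*} [LieRing g] [LieAlgebra ℂ g] (D : ParabolicDecomp g)
    (h : LieSubalgebra ℂ g) (hhl : h ≤ D.l)
    (N : Type*) [AddCommGroup N] [Module ℂ N] [LieRingModule D.l N] [LieModule ℂ D.l N]
    (μ : g → ℂ) : Submodule ℂ N where
  carrier := {v : N | ∀ (x : g) (hx : x ∈ h), ⁅(⟨x, hhl hx⟩ : D.l), v⁆ = μ x • v}
  add_mem' := by
    intro a b ha hb x hx
    rw [lie_add, ha x hx, hb x hx, smul_add]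
  zero_mem' := by
    intro x hx
    simp
  smul_mem' := by
    intro c a ha x hx
    rw [lie_smul, ha x hx, smul_comm]

section Env

set_option linter.unusedSectionVars false

variable {g : Type*} [LieRing g] [LieAlgebra ℂ g] [FiniteDimensional ℂ g]
  {P : Type*} [AddCommGroup P] [Module ℂ P] [LieRingModule g P] [LieModule ℂ g P]

variable (g) in
/-- The bracket pairing as a linear map out of a tensor product. -/
noncomputable def brktLift (A : Submodule ℂ P) : TensorProduct ℂ g ↥A →ₗ[ℂ] P :=
  TensorProduct.lift (LinearMap.mk₂ ℂ (fun (z : g) (a : ↥A) => ⁅z, (a : P)⁆)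
    (fun z w a => add_lie z w (a : P)) (fun t z a => smul_lie t z (a : P))
    (fun z a b => by simp [lie_add]) (fun t z a => by simp [lie_smul]))

variable (g) in
lemma brktLift_apply (A : Submodule ℂ P) (z : g) (a : ↥A) :
    brktLift g A (z ⊗ₜ a) = ⁅z, (a : P)⁆ := rfl

variable (g) in
/-- The span of `⁅g, A⁆`. -/
noncomputable def brktSpan (A : Submodule ℂ P) : Submodule ℂ P :=
  LinearMap.range (brktLift g A)

variable (g) in
instance (A : Submodule ℂ P) [FiniteDimensional ℂ ↥A] :
    FiniteDimensional ℂ ↥(brktSpan g A) :=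
  inferInstanceAs (Module.Finite ℂ ↥(LinearMap.range (brktLift g A)))

variable (g) in
lemma mem_brktSpan_iff (A : Submodule ℂ P) (q : P) :
    q ∈ brktSpan g A ↔ ∃ t, brktLift g A t = q :=
  LinearMap.mem_range

variable (g) in
lemma mem_brktSpan (A : Submodule ℂ P) (z : g) {a : P} (ha : a ∈ A) :
    ⁅z, a⁆ ∈ brktSpan g A := (mem_brktSpan_iff g A _).mpr ⟨z ⊗ₜ ⟨a, ha⟩, rfl⟩

lemma brktSpan_stable (u : LieSubalgebra ℂ g) (A : Submodule ℂ P)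
    (hA : ∀ x ∈ u, ∀ m ∈ A, ⁅x, m⁆ ∈ A) :
    ∀ x ∈ u, ∀ q ∈ brktSpan g A, ⁅x, q⁆ ∈ brktSpan g A := by
  intro x hx q hq
  obtain ⟨t, rfl⟩ := (mem_brktSpan_iff g A q).mp hq
  clear hq
  induction t with
  | zero => simpa using (brktSpan g A).zero_mem
  | tmul z a =>
    rw [brktLift_apply, leibniz_lie]
    exact add_mem (mem_brktSpan g A _ a.2) (mem_brktSpan g A z (hA x hx _ a.2))
  | add s t hs ht =>
    rw [map_add, lie_add]
    exact add_mem hs ht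

/-- Every element of a module generated (as Lie module) by a `u`-annihilated family lies in a
finite-dimensional `u`-stable subspace. -/
lemma exists_findim_stable (u : LieSubalgebra ℂ g) (s : Set P)
    (hgen : LieSubmodule.lieSpan ℂ g s = ⊤)
    (hann : ∀ x ∈ u, ∀ p ∈ s, ⁅x, p⁆ = 0) (v : P) :
    ∃ G : Submodule ℂ P, FiniteDimensional ℂ ↥G ∧ v ∈ G ∧
      ∀ x ∈ u, ∀ m ∈ G, ⁅x, m⁆ ∈ G := by
  let Dcar : Submodule ℂ P :=
    { carrier := {p | ∃ G : Submodule ℂ P, FiniteDimensional ℂ ↥G ∧ p ∈ G ∧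
        ∀ x ∈ u, ∀ m ∈ G, ⁅x, m⁆ ∈ G}
      add_mem' := by
        rintro p q ⟨G₁, h₁, hp, hs₁⟩ ⟨G₂, h₂, hq, hs₂⟩
        refine ⟨G₁ ⊔ G₂, inferInstance, add_mem (le_sup_left (a := G₁) hp)
          (le_sup_right (b := G₂) hq), ?_⟩
        intro x hx m hm
        obtain ⟨m₁, hm₁, m₂, hm₂, rfl⟩ := Submodule.mem_sup.mp hm
        rw [lie_add]
        exact add_mem (le_sup_left (a := G₁) (hs₁ x hx m₁ hm₁))
          (le_sup_right (b := G₂) (hs₂ x hx m₂ hm₂))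
      zero_mem' := ⟨⊥, inferInstance, Submodule.zero_mem ⊥, by simp⟩
      smul_mem' := by
        rintro t p ⟨G, hG, hp, hs⟩
        exact ⟨G, hG, Submodule.smul_mem _ _ hp, hs⟩ }
  let DD : LieSubmodule ℂ g P :=
    { Dcar with
      lie_mem := by
        rintro z p ⟨G, hG, hp, hs⟩
        refine ⟨G ⊔ brktSpan g G, inferInstance, le_sup_right (b := brktSpan g G)
          (mem_brktSpan g G z hp), ?_⟩
        intro x hx m hm
        obtain ⟨m₁, hm₁, m₂, hm₂, rfl⟩ := Submodule.mem_sup.mp hm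
        rw [lie_add]
        exact add_mem (le_sup_left (a := G) (hs x hx m₁ hm₁))
          (le_sup_right (b := brktSpan g G) (brktSpan_stable u G hs x hx m₂ hm₂)) }
  have hsD : s ⊆ DD := by
    intro p hp
    refine ⟨Submodule.span ℂ {p}, ?_, Submodule.mem_span_singleton_self p, ?_⟩
    · infer_instance
    · intro x hx m hm
      obtain ⟨t, rfl⟩ := Submodule.mem_span_singleton.mp hm
      rw [lie_smul, hann x hx p hp, smul_zero]
      exact Submodule.zero_mem _
  have : (⊤ : LieSubmodule ℂ g P) ≤ DD := by
    rw [← hgen]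
    exact LieSubmodule.lieSpan_le.mpr hsD
  exact this (LieSubmodule.mem_top v)

end Env
section Aux

variable {g : Type*} [LieRing g] [LieAlgebra ℂ g]
  {P : Type*} [AddCommGroup P] [Module ℂ P] [LieRingModule g P] [LieModule ℂ g P]

/-- Iterated bracket by a list of elements of a subalgebra, innermost first. -/
def listBrkt (u : LieSubalgebra ℂ g) : List ↥u → P → P
  | [], p => p
  | x :: c, p => listBrkt u c ⁅(x : g), p⁆

lemma listBrkt_nil (u : LieSubalgebra ℂ g) (p : P) : listBrkt u [] p = p := rfl

lemma listBrkt_cons (u : LieSubalgebra ℂ g) (x : ↥u) (c : List ↥u) (p : P) :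
    listBrkt u (x :: c) p = listBrkt u c ⁅(x : g), p⁆ := rfl

lemma listBrkt_zero (u : LieSubalgebra ℂ g) (c : List ↥u) :
    listBrkt (P := P) u c 0 = 0 := by
  induction c with
  | nil => rfl
  | cons x c ih => rw [listBrkt_cons, lie_zero, ih]

lemma listBrkt_add (u : LieSubalgebra ℂ g) (c : List ↥u) (p q : P) :
    listBrkt u c (p + q) = listBrkt u c p + listBrkt u c q := by
  induction c generalizing p q with
  | nil => rfl
  | cons x c ih => rw [listBrkt_cons, lie_add, ih, listBrkt_cons, listBrkt_cons]

lemma listBrkt_smul (u : LieSubalgebra ℂ g) (c : List ↥u) (t : ℂ) (p : P) :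
    listBrkt u c (t • p) = t • listBrkt u c p := by
  induction c generalizing p with
  | nil => rfl
  | cons x c ih => rw [listBrkt_cons, lie_smul, ih, listBrkt_cons]

variable (D : ParabolicDecomp g)

/-- The subspace spanned by `u⁻ · P`. -/
def Wspan : Submodule ℂ P :=
  Submodule.span ℂ {m : P | ∃ x ∈ D.uminus, ∃ w : P, m = ⁅x, w⁆}

lemma Wspan_lie_mem {x : g} (hx : x ∈ D.uminus) (w : P) : ⁅x, w⁆ ∈ Wspan D := by
  exact Submodule.subset_span ⟨x, hx, w, rfl⟩

lemma Wspan_l_stable {y : g} (hy : y ∈ D.l) {p : P} (hp : p ∈ Wspan D) :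
    ⁅y, p⁆ ∈ Wspan D := by
  induction hp using Submodule.span_induction with
  | mem q hq =>
    obtain ⟨x, hx, w, rfl⟩ := hq
    rw [leibniz_lie]
    exact add_mem (Wspan_lie_mem D (D.lum y hy x hx) w)
      (Wspan_lie_mem D hx ⁅y, w⁆)
  | zero => simpa using (Wspan D).zero_mem
  | add q r _ _ hq hr => rw [lie_add]; exact add_mem hq hr
  | smul t q _ hq => rw [lie_smul]; exact Submodule.smul_mem _ _ hq

/-- If a vector in `W = span (u⁻ · P)` is annihilated by `u`, it is zero. -/
lemma memW_eq_zero
    {C : Type*} [AddCommGroup C] [Module ℂ C] [LieRingModule D.l C] [LieModule ℂ D.l C]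
    (asi : AlmostSimpleInduction D C P)
    {m : P} (hmW : m ∈ Wspan D)
    (hmu : ∀ x ∈ D.u, ⁅x, m⁆ = 0) : m = 0 := by
  by_contra hm0
  -- the subspace of vectors whose whole `U(u)`-orbit lies in `W`
  let Rcar : Submodule ℂ P :=
    { carrier := {p | ∀ c : List ↥D.u, listBrkt D.u c p ∈ Wspan D}
      add_mem' := fun {p q} hp hq c => by
        rw [listBrkt_add]; exact add_mem (hp c) (hq c)
      zero_mem' := fun c => by rw [listBrkt_zero]; exact (Wspan D).zero_mem
      smul_mem' := fun t p hp c => by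
        rw [listBrkt_smul]; exact Submodule.smul_mem _ _ (hp c) }
  have hmem : ∀ p : P, p ∈ Rcar ↔ ∀ c : List ↥D.u, listBrkt D.u c p ∈ Wspan D :=
    fun p => Iff.rfl
  -- closure under the action of all of `g`
  have key : ∀ (c : List ↥D.u) (z : g) (p : P), p ∈ Rcar →
      listBrkt D.u c ⁅z, p⁆ ∈ Wspan D := by
    intro c
    induction c with
    | nil =>
      intro z p hp
      have hz : z ∈ D.l.toSubmodule ⊔ D.u.toSubmodule ⊔ D.uminus.toSubmodule := by
        rw [D.sup_top]; trivial
      obtain ⟨y, hy, w, hw, rfl⟩ := Submodule.mem_sup.mp hz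
      obtain ⟨a, ha, b, hb, rfl⟩ := Submodule.mem_sup.mp hy
      rw [listBrkt_nil, add_lie, add_lie]
      refine add_mem (add_mem ?_ ?_) (Wspan_lie_mem D hw p)
      · exact Wspan_l_stable D ha ((hmem p).mp hp [])
      · exact (hmem p).mp hp [⟨b, hb⟩]
    | cons x c ih =>
      intro z p hp
      rw [listBrkt_cons, leibniz_lie, listBrkt_add]
      refine add_mem (ih ⁅(x : g), z⁆ p hp) ?_
      exact ih z ⁅(x : g), p⁆ (fun c' => (hmem p).mp hp (x :: c'))
  let R : LieSubmodule ℂ g P :=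
    { Rcar with
      lie_mem := fun {z p} hp => by
        intro c
        exact key c z p hp }
  have hmR : m ∈ R := by
    intro c
    cases c with
    | nil => exact hmW
    | cons x c' =>
      rw [listBrkt_cons, hmu (x : g) x.2, listBrkt_zero]
      exact (Wspan D).zero_mem
  have hRne : R ≠ ⊥ := by
    intro hbot
    rw [hbot] at hmR
    exact hm0 (by simpa using hmR)
  obtain ⟨n, hn0, hnR⟩ := asi.almost_simple R hRne
  have hjW : asi.j n ∈ Wspan D := hnR []
  have hjr : asi.j n ∈ LinearMap.range asi.j := ⟨n, rfl⟩
  have := Submodule.disjoint_def.mp asi.pbw_compl.disjoint (asi.j n) hjr hjW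
  exact hn0 this

end Aux
section Trace

open Module

/-- Invariance-lemma trace argument: if `[A, B y] = B (φ y)` and `m ≠ 0` is a simultaneous
eigenvector of the `B y` with eigenvalues `lam y`, then `lam (φ y) = 0`. -/
lemma aux_trace_lemma {E : Type*} [AddCommGroup E] [Module ℂ E] [FiniteDimensional ℂ E]
    (A : Module.End ℂ E) {ι : Type*} (B : ι → Module.End ℂ E) (φ : ι → ι)
    (hcomm : ∀ y, A * B y - B y * A = B (φ y))
    {m : E} (hm : m ≠ 0) (lam : ι → ℂ) (heig : ∀ y, B y m = lam y • m) :
    ∀ y, lam (φ y) = 0 := by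
  classical
  set f : ℕ → E := fun i => (A ^ i) m with hf
  set WW : ℕ → Submodule ℂ E := fun i => Submodule.span ℂ (f '' Set.Iio i) with hWW
  have hWmono : ∀ {i j : ℕ}, i ≤ j → WW i ≤ WW j := fun {i j} hij =>
    Submodule.span_mono (Set.image_mono (fun a ha => lt_of_lt_of_le ha hij))
  have hfmem : ∀ {i j : ℕ}, i < j → f i ∈ WW j := fun {i j} hij =>
    Submodule.subset_span ⟨i, hij, rfl⟩
  have hfsucc : ∀ i, f (i + 1) = A (f i) := by
    intro i
    show (A ^ (i + 1)) m = A ((A ^ i) m)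
    rw [pow_succ']
    rfl
  have hAW : ∀ i, ∀ p ∈ WW i, A p ∈ WW (i + 1) := by
    intro i p hp
    induction hp using Submodule.span_induction with
    | mem q hq =>
      obtain ⟨k, hk, rfl⟩ := hq
      rw [← hfsucc k]
      exact hfmem (Nat.succ_lt_succ hk)
    | zero => rw [map_zero]; exact Submodule.zero_mem _
    | add a b _ _ ha hb => rw [map_add]; exact add_mem ha hb
    | smul t a _ ha => rw [map_smul]; exact Submodule.smul_mem _ _ ha
  -- existence of a linear dependence
  have hex : ∃ i, f i ∈ WW i := by
    by_contra hcon
    push_neg at hcon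
    have hgrow : ∀ i : ℕ, i ≤ finrank ℂ (WW i) := by
      intro i
      induction i with
      | zero => exact Nat.zero_le _
      | succ i ih =>
        have hlt : WW i < WW (i + 1) := by
          refine lt_of_le_of_ne (hWmono (Nat.le_succ i)) (fun he => hcon (i) ?_)
          rw [he]
          exact hfmem (Nat.lt_succ_self i)
        exact lt_of_le_of_lt ih (Submodule.finrank_lt_finrank_of_lt hlt)
    have h1 := hgrow (finrank ℂ E + 1)
    have h2 : finrank ℂ (WW (finrank ℂ E + 1)) ≤ finrank ℂ E := Submodule.finrank_le _
    omega
  set n := Nat.find hex with hn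
  have hfn : f n ∈ WW n := Nat.find_spec hex
  have hmin : ∀ i, i < n → f i ∉ WW i := fun i hi => Nat.find_min hex hi
  have hn1 : 0 < n := by
    rcases Nat.eq_zero_or_pos n with h0 | h0
    · exfalso
      have h' := hfn
      rw [h0] at h'
      have hb : f 0 ∈ (⊥ : Submodule ℂ E) := by
        have hIio : Set.Iio (0 : ℕ) = ∅ := by
          ext k; simp
        have himg : f '' Set.Iio (0 : ℕ) = ∅ := by rw [hIio]; simp
        simpa [hWW, hIio, himg, Submodule.span_empty] using h'
      rw [Submodule.mem_bot] at hb
      apply hm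
      simpa [hf] using hb
    · exact h0
  -- key triangularity claim
  have claim : ∀ i (y : ι), B y (f i) - lam y • f i ∈ WW i := by
    intro i
    induction i with
    | zero =>
      intro y
      have h0 : B y (f 0) - lam y • f 0 = 0 := by
        have hf0 : f 0 = m := by simp [hf]
        rw [hf0, heig y, sub_self]
      rw [h0]
      exact Submodule.zero_mem _
    | succ i ih =>
      intro y
      have hc : A (B y (f i)) - B y (A (f i)) = B (φ y) (f i) := by
        have := congrArg (fun (T : Module.End ℂ E) => T (f i)) (hcomm y)
        simpa using this
      have hc' : B y (A (f i)) = A (B y (f i)) - B (φ y) (f i) := by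
        rw [← hc]; abel
      have key : B y (f (i + 1)) - lam y • f (i + 1) =
          A (B y (f i) - lam y • f i) - (B (φ y) (f i) - lam (φ y) • f i)
            - lam (φ y) • f i := by
        rw [hfsucc i, hc', map_sub, map_smul]
        abel
      rw [key]
      refine sub_mem (sub_mem (hAW i _ (ih y)) (hWmono (Nat.le_succ i) (ih (φ y)))) ?_
      exact Submodule.smul_mem _ _ (hfmem (Nat.lt_succ_self i))
  -- the space `W n` with its basis `f 0, ..., f (n-1)`
  set W := WW n with hWdef
  have hbW : ∀ i : Fin n, f i ∈ W := fun i => hfmem i.2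
  set b : Fin n → ↥W := fun i => ⟨f i, hbW i⟩ with hb
  have hWlift : ∀ (i : ℕ) (p : E) (hp : p ∈ WW i), i ≤ n → ∀ (hpW : p ∈ W),
      (⟨p, hpW⟩ : ↥W) ∈ Submodule.span ℂ (b '' {k : Fin n | (k : ℕ) < i}) := by
    intro i p hp
    induction hp using Submodule.span_induction with
    | mem q hq =>
      intro hi hpW
      obtain ⟨k, hk, rfl⟩ := hq
      have hkn : k < n := lt_of_lt_of_le hk hi
      exact Submodule.subset_span ⟨⟨k, hkn⟩, hk, rfl⟩
    | zero =>
      intro hi hpW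
      have : (⟨(0 : E), hpW⟩ : ↥W) = 0 := rfl
      rw [this]
      exact Submodule.zero_mem _
    | add a c ha' hc' ha hc =>
      intro hi hpW
      have haW : a ∈ W := hWmono hi ha'
      have hcW : c ∈ W := hWmono hi hc'
      have : (⟨a + c, hpW⟩ : ↥W) = ⟨a, haW⟩ + ⟨c, hcW⟩ := rfl
      rw [this]
      exact add_mem (ha hi haW) (hc hi hcW)
    | smul t a ha' ha =>
      intro hi hpW
      have haW : a ∈ W := hWmono hi ha'
      have : (⟨t • a, hpW⟩ : ↥W) = t • (⟨a, haW⟩ : ↥W) := rfl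
      rw [this]
      exact Submodule.smul_mem _ _ (ha hi haW)
  -- linear independence
  have hindep : LinearIndependent ℂ b := by
    rw [Fintype.linearIndependent_iff]
    intro c hc
    by_contra hcon
    push_neg at hcon
    obtain ⟨i0, hi0⟩ := hcon
    set s := Finset.univ.filter (fun i : Fin n => c i ≠ 0) with hs
    have hsne : s.Nonempty := ⟨i0, by simp [hs, hi0]⟩
    set jj := s.max' hsne with hjj
    have hjmem : jj ∈ s := s.max'_mem hsne
    have hcjj : c jj ≠ 0 := by
      have := hjmem
      rw [hs, Finset.mem_filter] at this
      exact this.2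
    have hle : ∀ i ∈ s, i ≤ jj := fun i hi => s.le_max' i hi
    have hsum : (∑ i, c i • f i) = 0 := by
      have := congrArg (W.subtype) hc
      simpa [hb] using this
    have hsplit : c jj • f jj = - ∑ i ∈ Finset.univ.erase jj, c i • f i := by
      have h1 : c jj • f jj + ∑ i ∈ Finset.univ.erase jj, c i • f i = ∑ i, c i • f i :=
        Finset.add_sum_erase Finset.univ (fun i : Fin n => c i • f (i : ℕ)) (Finset.mem_univ jj)
      rw [hsum] at h1
      exact eq_neg_of_add_eq_zero_left h1
    have hmemsum : (∑ i ∈ Finset.univ.erase jj, c i • f i) ∈ WW (jj : ℕ) := by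
      refine Submodule.sum_mem _ (fun i hi => ?_)
      by_cases hci : c i = 0
      · rw [hci, zero_smul]; exact Submodule.zero_mem _
      · have his : i ∈ s := by rw [hs, Finset.mem_filter]; exact ⟨Finset.mem_univ i, hci⟩
        have hij : i < jj := lt_of_le_of_ne (hle i his) (Finset.ne_of_mem_erase hi)
        exact Submodule.smul_mem _ _ (hfmem hij)
    have : f (jj : ℕ) ∈ WW (jj : ℕ) := by
      have h2 : f (jj : ℕ) = (c jj)⁻¹ • (c jj • f (jj : ℕ)) := by
        rw [smul_smul, inv_mul_cancel₀ hcjj, one_smul]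
      rw [h2, hsplit]
      exact Submodule.smul_mem _ _ (Submodule.neg_mem _ hmemsum)
    exact hmin (jj : ℕ) jj.2 this
  -- spanning
  have hspan : ⊤ ≤ Submodule.span ℂ (Set.range b) := by
    rintro ⟨p, hp⟩ -
    refine Submodule.span_mono (Set.image_subset_range b _) (hWlift n p hp le_rfl hp)
  set bb : Basis (Fin n) ℂ ↥W := Basis.mk hindep hspan with hbb
  have hbbapp : ∀ i, bb i = b i := fun i => Basis.mk_apply hindep hspan i
  -- stability of W
  have hBW : ∀ y, ∀ p ∈ W, B y p ∈ W := by
    intro y p hp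
    induction hp using Submodule.span_induction with
    | mem q hq =>
      obtain ⟨k, hk, rfl⟩ := hq
      have : B y (f k) = (B y (f k) - lam y • f k) + lam y • f k := by abel
      rw [this]
      exact add_mem (hWmono (le_of_lt hk) (claim k y))
        (Submodule.smul_mem _ _ (hfmem hk))
    | zero => rw [map_zero]; exact Submodule.zero_mem _
    | add a c _ _ ha hc => rw [map_add]; exact add_mem ha hc
    | smul t a _ ha => rw [map_smul]; exact Submodule.smul_mem _ _ ha
  have hAWn : ∀ p ∈ W, A p ∈ W := by
    intro p hp
    induction hp using Submodule.span_induction with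
    | mem q hq =>
      obtain ⟨k, hk, rfl⟩ := hq
      rw [← hfsucc k]
      rcases Nat.lt_or_ge (k + 1) n with h | h
      · exact hfmem h
      · have : k + 1 = n := le_antisymm (Nat.succ_le_of_lt hk) h
        rw [this]
        exact hfn
    | zero => rw [map_zero]; exact Submodule.zero_mem _
    | add a c _ _ ha hc => rw [map_add]; exact add_mem ha hc
    | smul t a _ ha => rw [map_smul]; exact Submodule.smul_mem _ _ ha
  -- restricted endomorphisms
  set A' : Module.End ℂ ↥W := A.restrict hAWn with hA'
  set B' : ι → Module.End ℂ ↥W := fun y => (B y).restrict (hBW y) with hB'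
  have hcomm' : ∀ y, A' * B' y - B' y * A' = B' (φ y) := by
    intro y
    ext p
    have := congrArg (fun (T : Module.End ℂ E) => T (p : E)) (hcomm y)
    simp only [LinearMap.sub_apply, Module.End.mul_apply] at this
    show (A (B y (p : E)) - B y (A (p : E)) : E) = B (φ y) (p : E)
    exact this
  -- the trace formula
  have htr : ∀ y, LinearMap.trace ℂ ↥W (B' y) = n • lam y := by
    intro y
    rw [LinearMap.trace_eq_matrix_trace ℂ bb]
    have hdiag : ∀ i : Fin n, (LinearMap.toMatrix bb bb (B' y)) i i = lam y := by
      intro i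
      rw [LinearMap.toMatrix_apply]
      have hmem : B y (f i) - lam y • f i ∈ WW (i : ℕ) := claim i y
      have hmemW : B y (f i) - lam y • f i ∈ W := hWmono i.2.le hmem
      have hdecomp : B' y (bb i) = lam y • bb i + ⟨B y (f i) - lam y • f i, hmemW⟩ := by
        apply Subtype.ext
        rw [hbbapp i]
        show (B y (f i) : E) = lam y • f i + (B y (f i) - lam y • f i)
        abel
      rw [hdecomp, map_add, map_smul]
      have h1 : bb.repr (bb i) i = 1 := by simp
      have h2 : bb.repr (⟨B y (f i) - lam y • f i, hmemW⟩ : ↥W) i = 0 := by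
        have hsp : (⟨B y (f i) - lam y • f i, hmemW⟩ : ↥W) ∈
            Submodule.span ℂ (b '' {k : Fin n | (k : ℕ) < (i : ℕ)}) :=
          hWlift (i : ℕ) _ hmem i.2.le hmemW
        have hsp' : (⟨B y (f i) - lam y • f i, hmemW⟩ : ↥W) ∈
            Submodule.span ℂ (⇑bb '' {k : Fin n | (k : ℕ) < (i : ℕ)}) := by
          have : ⇑bb = b := funext hbbapp
          rwa [this]
        have hsupp := (Basis.mem_span_image bb).mp hsp'
        by_contra hne
        have : i ∈ (bb.repr (⟨B y (f i) - lam y • f i, hmemW⟩ : ↥W)).support :=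
          Finsupp.mem_support_iff.mpr hne
        have := hsupp this
        simp at this
      rw [Finsupp.add_apply, Finsupp.smul_apply, h1, h2, add_zero, smul_eq_mul, mul_one]
    rw [Matrix.trace]
    simp only [Matrix.diag]
    rw [Finset.sum_congr rfl (fun i _ => hdiag i)]
    simp [Finset.card_univ]
  -- conclusion
  intro y
  have h0 : LinearMap.trace ℂ ↥W (B' (φ y)) = 0 := by
    rw [← hcomm' y, map_sub, LinearMap.trace_mul_comm, sub_self]
  rw [htr (φ y)] at h0
  have : (n : ℂ) * lam (φ y) = 0 := by
    rw [← nsmul_eq_mul]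
    exact h0
  rcases mul_eq_zero.mp this with h | h
  · exact absurd (Nat.cast_eq_zero.mp h) hn1.ne'
  · exact h
end Trace
section HU

open LieModule Module

variable {g : Type*} [LieRing g] [LieAlgebra ℂ g] [FiniteDimensional ℂ g]

/-- For a Cartan subalgebra `h` and an `h`-stable subspace `u` with `u ⊓ h = ⊥`,
we have `u ⊆ span ⁅h, u⁆`. -/
lemma u_le_span_bracket (h : LieSubalgebra ℂ g) [h.IsCartanSubalgebra]
    (u : LieSubalgebra ℂ g)
    (hstab : ∀ x ∈ h, ∀ b ∈ u, ⁅x, b⁆ ∈ u)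
    (hdisj : ∀ z : g, z ∈ h → z ∈ u → z = 0) :
    u.toSubmodule ≤ Submodule.span ℂ {z : g | ∃ a ∈ h, ∃ b ∈ u, z = ⁅a, b⁆} := by
  classical
  set HU := Submodule.span ℂ {z : g | ∃ a ∈ h, ∃ b ∈ u, z = ⁅a, b⁆} with hHU
  -- `u` as a Lie submodule over `h`
  let U : LieSubmodule ℂ ↥h g :=
    { u.toSubmodule with
      lie_mem := by
        intro x m hm
        exact hstab (x : g) x.2 m hm }
  have hUmem : ∀ z : g, z ∈ U ↔ z ∈ u := fun z => Iff.rfl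
  -- weight space decomposition of `U`
  have hdecomp := LieModule.iSup_genWeightSpace_eq_top ℂ ↥h ↥U
  have hcase : ∀ (χ : ↥h → ℂ) (w : ↥U), w ∈ genWeightSpace ↥U χ → (w : g) ∈ HU := by
    intro χ w hw
    by_cases hχ : χ = 0
    · -- zero weight: contained in the Cartan subalgebra, hence trivial
      subst hχ
      have hz : (w : g) ∈ LieAlgebra.zeroRootSubalgebra ℂ g h := by
        rw [LieAlgebra.mem_zeroRootSubalgebra]
        intro y
        obtain ⟨k, hk⟩ := (mem_genWeightSpace ↥U 0 w).mp hw y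
        refine ⟨k, ?_⟩
        have hcoe : ∀ (j : ℕ) (a : ↥U),
            ((((toEnd ℂ ↥h ↥U) y ^ j) a : ↥U) : g) = ((toEnd ℂ ↥h g) y ^ j) (a : g) := by
          intro j
          induction j with
          | zero => intro a; rfl
          | succ j ih =>
            intro a
            rw [pow_succ, pow_succ, Module.End.mul_apply, Module.End.mul_apply]
            exact (ih _).trans rfl
        have := congrArg (fun (t : ↥U) => (t : g)) hk
        simp only [Pi.zero_apply, zero_smul, sub_zero] at hk ⊢
        rw [← hcoe k w]
        rw [hk]
        rfl
      rw [LieAlgebra.zeroRootSubalgebra_eq_of_is_cartan ℂ g h] at hz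
      have : (w : g) = 0 := hdisj _ hz w.2
      rw [this]
      exact Submodule.zero_mem _
    · -- nonzero weight: the action of a suitable element of `h` is invertible
      have hy : ∃ y : ↥h, χ y ≠ 0 := by
        by_contra hcon
        push_neg at hcon
        exact hχ (funext fun y => hcon y)
      obtain ⟨y, hy⟩ := hy
      -- the endomorphism of the weight space
      set T := toEnd ℂ ↥h ↥(genWeightSpace ↥U χ) y with hT
      have hnil : IsNilpotent (T - algebraMap ℂ _ (χ y)) :=
        isNilpotent_toEnd_sub_algebraMap ↥U χ y
      have hunit : IsUnit T := by
        have heq : T = (T - algebraMap ℂ _ (χ y)) + algebraMap ℂ _ (χ y) := by abel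
        rw [heq]
        refine IsNilpotent.isUnit_add_right_of_commute hnil
          ((algebraMap ℂ _).isUnit_map (Ne.isUnit hy)) ?_
        exact (Algebra.commute_algebraMap_left _ _).symm
      have hsurj : ∀ ww : ↥(genWeightSpace ↥U χ), ∃ ww', T ww' = ww :=
        fun ww => ((Module.End.isUnit_iff T).mp hunit).surjective ww
      set wχ : ↥(genWeightSpace ↥U χ) := ⟨w, hw⟩ with hwχ
      obtain ⟨ww', hww'⟩ := hsurj wχ
      have hcoe2 : ((((T ww' : ↥(genWeightSpace ↥U χ)) : ↥U)) : g)
          = ⁅(y : g), ((ww' : ↥U) : g)⁆ := rfl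
      have h1 : (w : g) = ⁅(y : g), ((ww' : ↥U) : g)⁆ := by
        rw [← hcoe2, hww']
      rw [h1]
      exact Submodule.subset_span ⟨y, y.2, _, (ww' : ↥U).2, rfl⟩
  -- assemble
  intro z hz
  have hzU : (⟨z, hz⟩ : ↥U) ∈ (⊤ : LieSubmodule ℂ ↥h ↥U) := trivial
  rw [← hdecomp] at hzU
  have hzU' : (⟨z, hz⟩ : ↥U) ∈ (⨆ χ : ↥h → ℂ, (genWeightSpace ↥U χ : Submodule ℂ ↥U)) := by
    rw [← LieSubmodule.mem_toSubmodule, LieSubmodule.iSup_toSubmodule] at hzU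
    exact hzU
  have final : ∀ w : ↥U, w ∈ (⨆ χ : ↥h → ℂ, (genWeightSpace ↥U χ : Submodule ℂ ↥U)) →
      (w : g) ∈ HU := by
    intro w hw
    induction hw using Submodule.iSup_induction' with
    | mem χ w hw => exact hcase χ w hw
    | zero => exact Submodule.zero_mem _
    | add a c _ _ ha hc =>
      rw [Submodule.coe_add]
      exact add_mem ha hc
  exact final _ hzU'

end HU
section Eigen

open LieModule Module

variable {g : Type*} [LieRing g] [LieAlgebra ℂ g] [FiniteDimensional ℂ g]
  {P : Type*} [AddCommGroup P] [Module ℂ P] [LieRingModule g P] [LieModule ℂ g P]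

lemma exists_u_annihilated
    (h : LieSubalgebra ℂ g) [h.IsCartanSubalgebra]
    (u : LieSubalgebra ℂ g) [LieRing.IsNilpotent ↥u]
    (hstabu : ∀ x ∈ h, ∀ b ∈ u, ⁅x, b⁆ ∈ u)
    (hdisj : ∀ z : g, z ∈ h → z ∈ u → z = 0)
    (V : Submodule ℂ P) [FiniteDimensional ℂ ↥V]
    (hVu : ∀ x ∈ u, ∀ p ∈ V, ⁅x, p⁆ ∈ V)
    (hVh : ∀ x ∈ h, ∀ p ∈ V, ⁅x, p⁆ ∈ V)
    {v : P} (hvV : v ∈ V) (hv : v ≠ 0) :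
    ∃ m : P, m ∈ V ∧ m ≠ 0 ∧ ∀ x ∈ u, ⁅x, m⁆ = 0 := by
  classical
  -- V as a Lie module over u
  let V' : LieSubmodule ℂ ↥u P :=
    { V with
      lie_mem := by
        intro x p hp
        rw [LieSubalgebra.coe_bracket_of_module]
        exact hVu (x : g) x.2 p hp }
  have hVmem : ∀ p : P, p ∈ V' ↔ p ∈ V := fun p => Iff.rfl
  haveI : FiniteDimensional ℂ ↥V' := inferInstanceAs (FiniteDimensional ℂ ↥V)
  -- find a weight
  have hwt : ∃ χ : ↥u → ℂ, genWeightSpace ↥V' χ ≠ ⊥ := by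
    by_contra hcon
    push_neg at hcon
    have htop := LieModule.iSup_genWeightSpace_eq_top ℂ ↥u ↥V'
    rw [iSup_eq_bot.mpr hcon] at htop
    have : (⟨v, hvV⟩ : ↥V') ∈ (⊥ : LieSubmodule ℂ ↥u ↥V') := by
      rw [htop]; trivial
    rw [LieSubmodule.mem_bot] at this
    exact hv (by simpa using congrArg (fun (t : ↥V') => (t : P)) this)
  set χ : Weight ℂ ↥u ↥V' := ⟨Classical.choose hwt, Classical.choose_spec hwt⟩ with hχdef
  obtain ⟨mm, hmm0, hmmeig⟩ := LieModule.exists_forall_lie_eq_smul ℂ ↥u ↥V' χ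
  -- the trace lemma kills χ on ⁅h, u⁆
  have hχvanish : ∀ (x : g) (hx : x ∈ h), ∀ y : ↥u,
      χ ⟨⁅x, (y : g)⁆, hstabu x hx (y : g) y.2⟩ = 0 := by
    intro x hx y
    set A : Module.End ℂ ↥V' :=
      { toFun := fun p => ⟨⁅x, (p : P)⁆, hVh x hx _ p.2⟩
        map_add' := fun p q => by
          apply Subtype.ext
          simp [lie_add]
        map_smul' := fun t p => by
          apply Subtype.ext
          simp [lie_smul] } with hA
    set B : ↥u → Module.End ℂ ↥V' := fun y => toEnd ℂ ↥u ↥V' y with hB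
    set φ : ↥u → ↥u := fun y => ⟨⁅x, (y : g)⁆, hstabu x hx (y : g) y.2⟩ with hφ
    have hcomm : ∀ y, A * B y - B y * A = B (φ y) := by
      intro z
      ext p
      simp only [LinearMap.sub_apply, Module.End.mul_apply, AddSubgroupClass.coe_sub]
      have h1 : ((A ((B z) p) : ↥V') : P) = ⁅x, ⁅(z : g), (p : P)⁆⁆ := rfl
      have h2 : (((B z) (A p) : ↥V') : P) = ⁅(z : g), ⁅x, (p : P)⁆⁆ := rfl
      have h3 : (((B (φ z)) p : ↥V') : P) = ⁅⁅x, (z : g)⁆, (p : P)⁆ := rfl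
      rw [h1, h2, h3, leibniz_lie x (z : g) (p : P)]
      abel
    have := aux_trace_lemma A B φ hcomm hmm0 (fun y => χ y)
      (fun y => hmmeig y) y
    exact this
  -- χ vanishes on all of u since u = ⁅h, u⁆
  have hspan := u_le_span_bracket h u hstabu hdisj
  -- the subspace of elements z of u with ⁅z, mm⁆ = 0
  have hbr : ∀ (z : ↥u), (⁅z, mm⁆ : ↥V') = χ z • mm := hmmeig
  let K : Submodule ℂ g :=
    { carrier := {z : g | ∃ hz : z ∈ u, (⁅(⟨z, hz⟩ : ↥u), mm⁆ : ↥V') = 0}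
      add_mem' := by
        rintro z₁ z₂ ⟨h₁, e₁⟩ ⟨h₂, e₂⟩
        refine ⟨add_mem h₁ h₂, ?_⟩
        have : (⟨z₁ + z₂, add_mem h₁ h₂⟩ : ↥u) = ⟨z₁, h₁⟩ + ⟨z₂, h₂⟩ := rfl
        rw [this, add_lie, e₁, e₂, add_zero]
      zero_mem' := by
        refine ⟨zero_mem _, ?_⟩
        have : (⟨(0 : g), zero_mem _⟩ : ↥u) = 0 := rfl
        rw [this, zero_lie]
      smul_mem' := by
        rintro t z ⟨hz, e⟩
        refine ⟨Submodule.smul_mem _ t hz, ?_⟩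
        have : (⟨t • z, Submodule.smul_mem _ t hz⟩ : ↥u) = t • ⟨z, hz⟩ := rfl
        rw [this, smul_lie, e, smul_zero] }
  have hKgen : Submodule.span ℂ {z : g | ∃ a ∈ h, ∃ b ∈ u, z = ⁅a, b⁆} ≤ K := by
    rw [Submodule.span_le]
    rintro z ⟨a, ha, b, hb, rfl⟩
    refine ⟨hstabu a ha b hb, ?_⟩
    have := hbr ⟨⁅a, b⁆, hstabu a ha b hb⟩
    rw [this]
    have h0 : χ (⟨⁅a, b⁆, hstabu a ha b hb⟩ : ↥u) = 0 := hχvanish a ha ⟨b, hb⟩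
    rw [h0, zero_smul]
  have hann : ∀ x ∈ u, ⁅x, ((mm : P))⁆ = 0 := by
    intro x hx
    have hxK : x ∈ K := hKgen (hspan hx)
    obtain ⟨hz, e⟩ := hxK
    have : (⁅(⟨x, hz⟩ : ↥u), mm⁆ : ↥V') = 0 := e
    have hcoe := congrArg (fun (t : ↥V') => (t : P)) this
    simpa using hcoe
  refine ⟨(mm : P), mm.2, ?_, hann⟩
  intro hc
  exact hmm0 (by apply Subtype.ext; simpa using hc)

end Eigen
/-- Let `C` be a weight `l`-module with support a single coset of `h_s^*` and
`P = Ind_p(C)` the associated almost-simple quotient of the parabolic induction.  If `v` is a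
non-zero weight vector of `P`, then `(U(u)·v) ∩ (1 ⊗ C) ≠ 0`, where `U(u)·v` is the smallest
subspace of `P` containing `v` and stable under the action of `u`, and `1 ⊗ C` is the
canonical copy of `C` in `P`. -/
theorem uOrbit_meets_canonical_copy
    (g : Type*) [LieRing g] [LieAlgebra ℂ g] [FiniteDimensional ℂ g]
    [LieAlgebra.IsSemisimple ℂ g]
    (D : ParabolicDecomp g)
    (h : LieSubalgebra ℂ g) [h.IsCartanSubalgebra] (hhl : h ≤ D.l)
    (C : Type*) [AddCommGroup C] [Module ℂ C] [LieRingModule D.l C] [LieModule ℂ D.l C]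
    (P : Type*) [AddCommGroup P] [Module ℂ P] [LieRingModule g P] [LieModule ℂ g P]
    (asi : AlmostSimpleInduction D C P)
    (hCweight : Submodule.span ℂ {v : C | ∃ χ : g → ℂ, ∀ (x : g) (hx : x ∈ h),
      ⁅(⟨x, hhl hx⟩ : D.l), v⁆ = χ x • v} = ⊤)
    (ζ : g → ℂ)
    (hsupp : ∀ μ : g → ℂ, lWeightSpace D h hhl C μ ≠ ⊥ →
      ∀ x ∈ h, (∀ y ∈ D.l, ⁅x, y⁆ = 0) → μ x = ζ x)
    (v : P) (hv : v ≠ 0)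
    (hwt : ∃ μ : g → ℂ, ∀ x ∈ h, ⁅x, v⁆ = μ x • v) :
    ∃ w : P, w ≠ 0 ∧ w ∈ LinearMap.range asi.j ∧
      w ∈ sInf {Q : Submodule ℂ P | v ∈ Q ∧ ∀ x ∈ D.u, ∀ m ∈ Q, ⁅x, m⁆ ∈ Q} := by
  classical
  obtain ⟨μ, hμ⟩ := hwt
  set S : Set (Submodule ℂ P) :=
    {Q : Submodule ℂ P | v ∈ Q ∧ ∀ x ∈ D.u, ∀ m ∈ Q, ⁅x, m⁆ ∈ Q} with hSdef
  set V : Submodule ℂ P := sInf S with hVdef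
  have hvV : v ∈ V := Submodule.mem_sInf.mpr (fun Q hQ => hQ.1)
  have hVu : ∀ x ∈ D.u, ∀ m ∈ V, ⁅x, m⁆ ∈ V := by
    intro x hx m hm
    exact Submodule.mem_sInf.mpr (fun Q hQ => hQ.2 x hx m (Submodule.mem_sInf.mp hm Q hQ))
  -- stability of V under h
  have hVh : ∀ x ∈ h, ∀ m ∈ V, ⁅x, m⁆ ∈ V := by
    let Q' : Submodule ℂ P :=
      { carrier := {m : P | m ∈ V ∧ ∀ x ∈ h, ⁅x, m⁆ ∈ V}
        add_mem' := by
          rintro p q ⟨hp, hp'⟩ ⟨hq, hq'⟩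
          exact ⟨add_mem hp hq, fun x hx => by
            rw [lie_add]; exact add_mem (hp' x hx) (hq' x hx)⟩
        zero_mem' := ⟨zero_mem _, fun x hx => by rw [lie_zero]; exact zero_mem _⟩
        smul_mem' := by
          rintro t p ⟨hp, hp'⟩
          exact ⟨Submodule.smul_mem _ _ hp, fun x hx => by
            rw [lie_smul]; exact Submodule.smul_mem _ _ (hp' x hx)⟩ }
    have hQ'S : Q' ∈ S := by
      constructor
      · exact ⟨hvV, fun x hx => by rw [hμ x hx]; exact Submodule.smul_mem _ _ hvV⟩
      · rintro y hy m ⟨hm, hm'⟩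
        refine ⟨hVu y hy m hm, fun x hx => ?_⟩
        rw [leibniz_lie]
        have hxyu : ⁅x, y⁆ ∈ D.u := D.lu x (hhl hx) y hy
        exact add_mem (hVu _ hxyu m hm) (hVu y hy _ (hm' x hx))
    intro x hx m hm
    have hmQ' : m ∈ Q' := Submodule.mem_sInf.mp hm Q' hQ'S
    exact hmQ'.2 x hx
  -- finite dimensionality of V
  obtain ⟨G, hGfd, hvG, hGstab⟩ := exists_findim_stable D.u (Set.range asi.j)
      asi.generates
      (by rintro x hx p ⟨n, rfl⟩; exact asi.u_annihilates x hx n) v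
  haveI := hGfd
  have hVG : V ≤ G := sInf_le ⟨hvG, hGstab⟩
  haveI : FiniteDimensional ℂ ↥V := Submodule.finiteDimensional_of_le hVG
  haveI := D.u_nilpotent
  have hstabu : ∀ x ∈ h, ∀ b ∈ D.u, ⁅x, b⁆ ∈ D.u :=
    fun x hx b hb => D.lu x (hhl hx) b hb
  have hdisj : ∀ z : g, z ∈ h → z ∈ D.u → z = 0 := by
    intro z h1 h2
    exact Submodule.disjoint_def.mp D.disj_lu z (hhl h1) h2
  obtain ⟨m, hmV, hm0, hmann⟩ :=
    exists_u_annihilated h D.u hstabu hdisj V hVu hVh hvV hv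
  -- decompose m along the PBW splitting
  have hcompl := asi.pbw_compl
  have hmtop : m ∈ (⊤ : Submodule ℂ P) := trivial
  rw [← hcompl.sup_eq_top] at hmtop
  obtain ⟨a, ha, w, hw, he⟩ := Submodule.mem_sup.mp hmtop
  have hannw : ∀ x ∈ D.u, ⁅x, w⁆ = 0 := by
    intro x hx
    obtain ⟨n, rfl⟩ := ha
    have h1 : ⁅x, m⁆ = 0 := hmann x hx
    rw [← he, lie_add, asi.u_annihilates x hx n, zero_add] at h1
    exact h1
  have hw0 : w = 0 := memW_eq_zero D asi hw hannw
  refine ⟨m, hm0, ?_, hmV⟩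
  have hma : m = a := by rw [← he, hw0, add_zero]
  rw [hma]
  exact ha
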